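/- Let P be a continuous probability transition kernel on a finite nonempty alphabet G and let φ_P be its update rule. Then for every history w and every symbol g ∈ G, the Lebesgue measure of the set { u ∈ [0,1) : φ_P(u, w) = g } equals P(g|w); in particular, if U is uniformly distributed on [0,1), then φ_P(U, w) has distribution P(·|w). -/
import Mathlib


open Finset Filter

variable {G : Type*}

/-- The ball of all histories admitting `s` as a suffix.
A history is `w : ℕ → G`, index `i` encoding the symbol `w_{-(i+1)}` (index 0 = most recent).
A word `s : List G` encodes `(s_{-n},…,s_{-1})` with list index `i` = symbol `s_{-(i+1)}`. -/
def tree (s : List G) : Set (ℕ → G) := {w | ∀ i : Fin s.length, w i = s.get i}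

/-- The word `w_{-k:-1}` formed by the last `k` symbols of the history `w`. -/
def word (w : ℕ → G) (k : ℕ) : List G := List.ofFn fun i : Fin k => w i

/-- A probability transition kernel on `G`. -/
def IsKernel [Fintype G] (P : (ℕ → G) → G → ℝ) : Prop :=
  ∀ w, (∀ g, 0 ≤ P w g) ∧ ∑ g, P w g = 1

/-- Total variation distance between distributions on a finite alphabet. -/
noncomputable def tvDist [Fintype G] (p q : G → ℝ) : ℝ := (1 / 2) * ∑ a, |p a - q a|

/-- Oscillation `η_P(s)` of the kernel `P` on the ball `tree s`. -/
noncomputable def eta [Fintype G] (P : (ℕ → G) → G → ℝ) (s : List G) : ℝ :=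
  ⨆ w : tree s, ⨆ z : tree s, tvDist (P w) (P z)

/-- Coupling coefficient `a_{|s|}(g|s)`. -/
noncomputable def aCoef (P : (ℕ → G) → G → ℝ) (g : G) (s : List G) : ℝ :=
  ⨅ w : tree s, P w g

/-- Coupling coefficient `A_{|s|}(s)`. -/
noncomputable def ACoef [Fintype G] (P : (ℕ → G) → G → ℝ) (s : List G) : ℝ :=
  ∑ g, aCoef P g s

/-- `A_k^- = inf { A_k(s) : |s| = k }`. -/
noncomputable def Aminus [Fintype G] (P : (ℕ → G) → G → ℝ) (k : ℕ) : ℝ :=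
  ⨅ s : {s : List G // s.length = k}, ACoef P s.1

/-- Continuity of the kernel: continuity from the product topology (G discrete) to
the total variation distance. -/
def KernelContinuous [Fintype G] (P : (ℕ → G) → G → ℝ) : Prop :=
  ∀ w : ℕ → G, ∀ ε > 0, ∃ k : ℕ, ∀ z : ℕ → G, (∀ i < k, z i = w i) → tvDist (P w) (P z) < ε

/-- `α_k(g | w_{-k:-1})` with the convention `A_{-1}(ε) = a_{-1}(·|ε) = 0`. -/
noncomputable def alphaCoef [Fintype G] [LinearOrder G] (P : (ℕ → G) → G → ℝ)
    (k : ℕ) (g : G) (w : ℕ → G) : ℝ :=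
  (if k = 0 then 0 else ACoef P (word w (k - 1))) +
    ∑ h ∈ univ.filter (fun h => h < g),
      (aCoef P h (word w k) - if k = 0 then 0 else aCoef P h (word w (k - 1)))

/-- `β_k(g | w_{-k:-1})` with the convention `A_{-1}(ε) = a_{-1}(·|ε) = 0`. -/
noncomputable def betaCoef [Fintype G] [LinearOrder G] (P : (ℕ → G) → G → ℝ)
    (k : ℕ) (g : G) (w : ℕ → G) : ℝ :=
  (if k = 0 then 0 else ACoef P (word w (k - 1))) +
    ∑ h ∈ univ.filter (fun h => h ≤ g),
      (aCoef P h (word w k) - if k = 0 then 0 else aCoef P h (word w (k - 1)))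

/-- `φ` is the update rule of `P`: for every `u ∈ [0,1)` and history `w`, `φ u w` is the
(unique) symbol `g` such that `α_k(g|w_{-k:-1}) ≤ u < β_k(g|w_{-k:-1})` for some `k`. -/
def IsUpdateRule [Fintype G] [LinearOrder G] (P : (ℕ → G) → G → ℝ)
    (φ : ℝ → (ℕ → G) → G) : Prop :=
  ∀ u ∈ Set.Ico (0 : ℝ) 1, ∀ w : ℕ → G, ∃ k : ℕ,
    alphaCoef P k (φ u w) w ≤ u ∧ u < betaCoef P k (φ u w) w


set_option linter.unusedSectionVars false

lemma mem_tree_word {w z : ℕ → G} {k : ℕ} : z ∈ tree (word w k) ↔ ∀ i < k, z i = w i := by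
  simp only [tree, word, Set.mem_setOf_eq]
  constructor
  · intro h i hi
    have := h (Fin.cast (by simp) (⟨i, hi⟩ : Fin k))
    rw [List.get_ofFn] at this
    simpa using this
  · intro h i
    rw [List.get_ofFn]
    exact h _ (by simpa using i.2)

lemma self_mem_tree_word (w : ℕ → G) (k : ℕ) : w ∈ tree (word w k) :=
  mem_tree_word.2 fun _ _ => rfl

section Aux
variable [Fintype G] {P : (ℕ → G) → G → ℝ} (hP : IsKernel P)
include hP

lemma aCoef_nonneg (g : G) (s : List G) : 0 ≤ aCoef P g s :=
  Real.iInf_nonneg fun z => (hP z.1).1 g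

lemma aCoef_le {z : ℕ → G} {s : List G} (hz : z ∈ tree s) (g : G) : aCoef P g s ≤ P z g :=
  ciInf_le ⟨0, by rintro x ⟨z', rfl⟩; exact (hP z'.1).1 g⟩ (⟨z, hz⟩ : tree s)

lemma aCoef_word_le (w : ℕ → G) (k : ℕ) (g : G) : aCoef P g (word w k) ≤ P w g :=
  aCoef_le hP (self_mem_tree_word w k) g

lemma aCoef_word_mono (w : ℕ → G) {k n : ℕ} (hkn : k ≤ n) (g : G) :
    aCoef P g (word w k) ≤ aCoef P g (word w n) := by
  haveI : Nonempty (tree (word w n)) := ⟨⟨w, self_mem_tree_word w n⟩⟩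
  exact le_ciInf fun z => aCoef_le hP (mem_tree_word.2 fun i hi =>
    mem_tree_word.1 z.2 i (lt_of_lt_of_le hi hkn)) g

lemma ACoef_word_nonneg (w : ℕ → G) (k : ℕ) : 0 ≤ ACoef P (word w k) :=
  Finset.sum_nonneg fun g _ => aCoef_nonneg hP g _

lemma ACoef_word_le_one (w : ℕ → G) (k : ℕ) : ACoef P (word w k) ≤ 1 := by
  have := (hP w).2
  calc ACoef P (word w k) ≤ ∑ g, P w g :=
        Finset.sum_le_sum fun g _ => aCoef_word_le hP w k g
    _ = 1 := (hP w).2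

lemma ACoef_word_mono (w : ℕ → G) {k n : ℕ} (hkn : k ≤ n) :
    ACoef P (word w k) ≤ ACoef P (word w n) :=
  Finset.sum_le_sum fun g _ => aCoef_word_mono hP w hkn g

lemma tendsto_aCoef (hc : KernelContinuous P) (w : ℕ → G) (g : G) :
    Tendsto (fun n => aCoef P g (word w n)) atTop (nhds (P w g)) := by
  rw [Metric.tendsto_atTop]
  intro ε hε
  obtain ⟨k, hk⟩ := hc w (ε / 4) (by linarith)
  refine ⟨k, fun n hn => ?_⟩
  have h1 : aCoef P g (word w n) ≤ P w g := aCoef_word_le hP w n g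
  have h2 : P w g - ε / 2 ≤ aCoef P g (word w n) := by
    haveI : Nonempty (tree (word w n)) := ⟨⟨w, self_mem_tree_word w n⟩⟩
    refine le_ciInf fun z => ?_
    have hz : ∀ i < k, z.1 i = w i := fun i hi => mem_tree_word.1 z.2 i (lt_of_lt_of_le hi hn)
    have htv := hk z.1 hz
    have habs : |P w g - P z.1 g| ≤ ∑ a, |P w a - P z.1 a| :=
      Finset.single_le_sum (f := fun a => |P w a - P z.1 a|) (fun a _ => abs_nonneg _) (mem_univ g)
    have : |P w g - P z.1 g| ≤ ε / 2 := by
      unfold tvDist at htv; linarith [abs_le.1 habs]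
    linarith [abs_le.1 this]
  rw [Real.dist_eq]
  rw [abs_sub_lt_iff]
  constructor <;> linarith

end Aux

noncomputable def dStep [Fintype G] (P : (ℕ → G) → G → ℝ) (w : ℕ → G) (k : ℕ) (g : G) : ℝ :=
  aCoef P g (word w k) - if k = 0 then 0 else aCoef P g (word w (k - 1))

noncomputable def Apre [Fintype G] (P : (ℕ → G) → G → ℝ) (w : ℕ → G) (k : ℕ) : ℝ :=
  if k = 0 then 0 else ACoef P (word w (k - 1))

section Aux2
variable [Fintype G] [LinearOrder G] {P : (ℕ → G) → G → ℝ} (hP : IsKernel P)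

lemma alphaCoef_eq (k : ℕ) (g : G) (w : ℕ → G) :
    alphaCoef P k g w = Apre P w k + ∑ h ∈ univ.filter (fun h => h < g), dStep P w k h := rfl

lemma betaCoef_eq (k : ℕ) (g : G) (w : ℕ → G) :
    betaCoef P k g w = Apre P w k + ∑ h ∈ univ.filter (fun h => h ≤ g), dStep P w k h := rfl

lemma Apre_succ (w : ℕ → G) (k : ℕ) : Apre P w (k + 1) = ACoef P (word w k) := by
  simp [Apre]

include hP

lemma dStep_nonneg (w : ℕ → G) (k : ℕ) (g : G) : 0 ≤ dStep P w k g := by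
  unfold dStep
  cases k with
  | zero => simpa using aCoef_nonneg hP g (word w 0)
  | succ n => simpa using aCoef_word_mono hP w (Nat.le_succ n) g

lemma sum_dStep (w : ℕ → G) (k : ℕ) :
    Apre P w k + ∑ h, dStep P w k h = ACoef P (word w k) := by
  unfold dStep Apre ACoef
  cases k with
  | zero => simp
  | succ n => simp [Finset.sum_sub_distrib]

lemma Apre_nonneg (w : ℕ → G) (k : ℕ) : 0 ≤ Apre P w k := by
  unfold Apre
  split
  · exact le_refl 0
  · exact ACoef_word_nonneg hP w _

lemma Apre_mono (w : ℕ → G) {k n : ℕ} (hkn : k ≤ n) : Apre P w k ≤ Apre P w n := by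
  cases k with
  | zero => simpa [Apre] using Apre_nonneg hP w n
  | succ m =>
    cases n with
    | zero => omega
    | succ m' =>
      rw [Apre_succ, Apre_succ]
      exact ACoef_word_mono hP w (by omega)

lemma Apre_le_alpha (w : ℕ → G) (k : ℕ) (g : G) : Apre P w k ≤ alphaCoef P k g w := by
  rw [alphaCoef_eq]
  have : 0 ≤ ∑ h ∈ univ.filter (fun h => h < g), dStep P w k h :=
    Finset.sum_nonneg fun h _ => dStep_nonneg hP w k h
  linarith

lemma alpha_le_beta (w : ℕ → G) (k : ℕ) (g : G) : alphaCoef P k g w ≤ betaCoef P k g w := by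
  rw [alphaCoef_eq, betaCoef_eq]
  have : (univ.filter (fun h => h < g)) ⊆ (univ.filter (fun h => h ≤ g)) := by
    intro h hh; simp_all; exact le_of_lt hh
  have := Finset.sum_le_sum_of_subset_of_nonneg this
    (fun h _ _ => dStep_nonneg hP w k h)
  linarith

lemma beta_le_Apre_succ (w : ℕ → G) (k : ℕ) (g : G) :
    betaCoef P k g w ≤ Apre P w (k + 1) := by
  rw [betaCoef_eq, Apre_succ, ← sum_dStep hP w k]
  have : (univ.filter (fun h => h ≤ g)) ⊆ univ := Finset.filter_subset _ _
  have := Finset.sum_le_sum_of_subset_of_nonneg this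
    (fun h _ _ => dStep_nonneg hP w k h)
  linarith

lemma beta_le_alpha_of_lt (w : ℕ → G) (k : ℕ) {g g' : G} (hgg : g < g') :
    betaCoef P k g w ≤ alphaCoef P k g' w := by
  rw [alphaCoef_eq, betaCoef_eq]
  have hsub : (univ.filter (fun h => h ≤ g)) ⊆ (univ.filter (fun h => h < g')) := by
    intro h hh; simp_all; exact lt_of_le_of_lt hh hgg
  have := Finset.sum_le_sum_of_subset_of_nonneg hsub
    (fun h _ _ => dStep_nonneg hP w k h)
  linarith

lemma beta_sub_alpha (w : ℕ → G) (k : ℕ) (g : G) :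
    betaCoef P k g w - alphaCoef P k g w = dStep P w k g := by
  rw [alphaCoef_eq, betaCoef_eq]
  have : (univ.filter (fun h => h ≤ g)) = insert g (univ.filter (fun h => h < g)) := by
    ext h; simp [le_iff_lt_or_eq]; tauto
  rw [this, Finset.sum_insert (by simp)]
  ring

lemma beta_lt_alpha_strip (w : ℕ → G) {k k' : ℕ} (hkk : k < k') (g g' : G) :
    betaCoef P k g w ≤ alphaCoef P k' g' w :=
  le_trans (beta_le_Apre_succ hP w k g)
    (le_trans (Apre_mono hP w hkk) (Apre_le_alpha hP w k' g'))

lemma unique_symbol (w : ℕ → G) {u : ℝ} {k k' : ℕ} {g g' : G}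
    (h1 : alphaCoef P k g w ≤ u) (h2 : u < betaCoef P k g w)
    (h3 : alphaCoef P k' g' w ≤ u) (h4 : u < betaCoef P k' g' w) : g = g' := by
  rcases lt_trichotomy k k' with hk | rfl | hk
  · exact absurd (lt_of_lt_of_le h2 (le_trans (beta_lt_alpha_strip hP w hk g g') h3)) (lt_irrefl u)
  · rcases lt_trichotomy g g' with hg | rfl | hg
    · exact absurd (lt_of_lt_of_le h2 (le_trans (beta_le_alpha_of_lt hP w k hg) h3)) (lt_irrefl u)
    · rfl
    · exact absurd (lt_of_lt_of_le h4 (le_trans (beta_le_alpha_of_lt hP w k hg) h1)) (lt_irrefl u)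
  · exact absurd (lt_of_lt_of_le h4 (le_trans (beta_lt_alpha_strip hP w hk g' g) h1)) (lt_irrefl u)

lemma alpha_nonneg (w : ℕ → G) (k : ℕ) (g : G) : 0 ≤ alphaCoef P k g w :=
  le_trans (Apre_nonneg hP w k) (Apre_le_alpha hP w k g)

lemma beta_le_one (w : ℕ → G) (k : ℕ) (g : G) : betaCoef P k g w ≤ 1 := by
  refine le_trans (beta_le_Apre_succ hP w k g) ?_
  rw [Apre_succ]
  exact ACoef_word_le_one hP w k

end Aux2

open MeasureTheory in
/-- The update rule `φ_P` of a continuous kernel `P` satisfies: for every history `w` and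
every symbol `g`, the Lebesgue measure of `{u ∈ [0,1) : φ_P(u,w) = g}` equals `P(g|w)`
(so if `U` is uniform on `[0,1)`, then `φ_P(U,w)` has distribution `P(·|w)`). -/
theorem stmt_3 [Fintype G] [Nonempty G] [LinearOrder G] (P : (ℕ → G) → G → ℝ)
    (hP : IsKernel P) (hc : KernelContinuous P)
    (φ : ℝ → (ℕ → G) → G) (hφ : IsUpdateRule P φ) (w : ℕ → G) (g : G) :
    volume {u : ℝ | u ∈ Set.Ico (0 : ℝ) 1 ∧ φ u w = g} = ENNReal.ofReal (P w g) := by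
  have hset : {u : ℝ | u ∈ Set.Ico (0:ℝ) 1 ∧ φ u w = g} =
      ⋃ k, Set.Ico (alphaCoef P k g w) (betaCoef P k g w) := by
    ext u
    simp only [Set.mem_setOf_eq, Set.mem_iUnion, Set.mem_Ico]
    constructor
    · rintro ⟨hu, rfl⟩
      obtain ⟨k, h1, h2⟩ := hφ u hu w
      exact ⟨k, h1, h2⟩
    · rintro ⟨k, h1, h2⟩
      have hu : u ∈ Set.Ico (0:ℝ) 1 :=
        ⟨le_trans (alpha_nonneg hP w k g) h1, lt_of_lt_of_le h2 (beta_le_one hP w k g)⟩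
      obtain ⟨k', h3, h4⟩ := hφ u hu w
      exact ⟨hu, unique_symbol hP w h3 h4 h1 h2⟩
  rw [hset]
  have hdisj : Pairwise (Function.onFun Disjoint
      (fun k => Set.Ico (alphaCoef P k g w) (betaCoef P k g w))) := by
    intro k k' hkk
    rw [Function.onFun, Set.disjoint_left]
    rintro u ⟨h1, h2⟩ ⟨h3, h4⟩
    rcases lt_or_gt_of_ne hkk with h | h
    · exact absurd (lt_of_lt_of_le h2 (le_trans (beta_lt_alpha_strip hP w h g g) h3)) (lt_irrefl u)
    · exact absurd (lt_of_lt_of_le h4 (le_trans (beta_lt_alpha_strip hP w h g g) h1)) (lt_irrefl u)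
  rw [measure_iUnion hdisj (fun k => measurableSet_Ico)]
  have hvol : ∀ k, volume (Set.Ico (alphaCoef P k g w) (betaCoef P k g w)) =
      ENNReal.ofReal (dStep P w k g) := by
    intro k
    rw [Real.volume_Ico, beta_sub_alpha hP w k g]
  simp_rw [hvol]
  have hsum : HasSum (fun k => dStep P w k g) (P w g) := by
    rw [hasSum_iff_tendsto_nat_of_nonneg (fun k => dStep_nonneg hP w k g)]
    have hpar : ∀ n, ∑ k ∈ Finset.range (n+1), dStep P w k g = aCoef P g (word w n) := by
      intro n
      induction n with
      | zero => simp [dStep]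
      | succ m ih =>
        rw [Finset.sum_range_succ, ih]
        simp [dStep]
    rw [← tendsto_add_atTop_iff_nat 1]
    simp only [hpar]
    exact tendsto_aCoef hP hc w g
  rw [← hsum.tsum_eq,
    ENNReal.ofReal_tsum_of_nonneg (fun k => dStep_nonneg hP w k g) hsum.summable]
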